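/- arXiv:1810.09744 — 8 statements merged into one kernel-verified Lean document; each statement's English description precedes it below -/
import Mathlib

section
/- If two paths in an intuitionistic unravelling end in the same world of the original model, they satisfy exactly the same intuitionistic propositional formulas: for (u_1,...,u_n), (v_1,...,v_k) ∈ W^un_w with u_n = v_k, Th_IL(M^un_w, (u_1,...,u_n)) = Th_IL(M^un_w, (v_1,...,v_k)). -/
/-- An intuitionistic Kripke Θ-model (frame conditions stated separately). -/
structure KModel (Θ : Type) where
  W : Type
  R : W → W → Prop
  V : Θ → W → Prop

/-- `M` is a genuine intuitionistic Kripke model: `R` is a preorder and `V` is monotone. -/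
def KModel.IsIntuitionistic {Θ : Type} (M : KModel Θ) : Prop :=
  (∀ w, M.R w w) ∧ (∀ u v w, M.R u v → M.R v w → M.R u w) ∧
    (∀ p u v, M.R u v → M.V p u → M.V p v)

/-- Intuitionistic propositional formulas over vocabulary Θ. -/
inductive IForm (Θ : Type) : Type
  | bot : IForm Θ
  | top : IForm Θ
  | atom : Θ → IForm Θ
  | and : IForm Θ → IForm Θ → IForm Θ
  | or : IForm Θ → IForm Θ → IForm Θ
  | impl : IForm Θ → IForm Θ → IForm Θ

/-- Standard intuitionistic Kripke satisfaction. -/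
def KModel.Sat {Θ : Type} (M : KModel Θ) : M.W → IForm Θ → Prop
  | _, .bot => False
  | _, .top => True
  | w, .atom p => M.V p w
  | w, .and φ ψ => M.Sat w φ ∧ M.Sat w ψ
  | w, .or φ ψ => M.Sat w φ ∨ M.Sat w ψ
  | w, .impl φ ψ => ∀ v, M.R w v → M.Sat v φ → M.Sat v ψ

/-- Worlds of the intuitionistic unravelling: R-paths starting at `w`
(the path `(w, u₁, ..., u_n)` is encoded by its tail `[u₁,...,u_n]`). -/
def KModel.Path {Θ : Type} (M : KModel Θ) (w : M.W) : Type :=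
  { l : List M.W // List.Chain M.R w l }

/-- The intuitionistic unravelling of `M` around `w`. -/
def KModel.unravel {Θ : Type} (M : KModel Θ) (w : M.W) : KModel Θ where
  W := M.Path w
  R := Relation.ReflTransGen (fun s t : M.Path w => ∃ u, t.1 = s.1 ++ [u])
  V p s := M.V p (s.1.getLastD w)

/-- The root `(w)` of the unravelling. -/
def KModel.root {Θ : Type} (M : KModel Θ) (w : M.W) : (M.unravel w).W :=
  ⟨[], List.Chain.nil⟩

/-- The last element of a path in the unravelling. -/
def KModel.last {Θ : Type} (M : KModel Θ) {w : M.W} (s : (M.unravel w).W) : M.W :=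
  s.1.getLastD w

/-- An asimulation from `(M₁,w₁)` to `(M₂,w₂)`; the relation
`A ⊆ (W₁×W₂) ∪ (W₂×W₁)` is given by its two components `A` and `A'`. -/
structure Asim {Θ : Type} (M₁ M₂ : KModel Θ) (w₁ : M₁.W) (w₂ : M₂.W)
    (A : M₁.W → M₂.W → Prop) (A' : M₂.W → M₁.W → Prop) : Prop where
  elem : A w₁ w₂
  satom₁ : ∀ p v s, A v s → M₁.V p v → M₂.V p s
  satom₂ : ∀ p v s, A' v s → M₂.V p v → M₁.V p s
  sback₁ : ∀ v s t, A v s → M₂.R s t → ∃ u, M₁.R v u ∧ A' t u ∧ A u t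
  sback₂ : ∀ v s t, A' v s → M₁.R s t → ∃ u, M₂.R v u ∧ A t u ∧ A' u t

/-- A bisimulation is a symmetric asimulation. -/
def Bisim {Θ : Type} (M₁ M₂ : KModel Θ) (w₁ : M₁.W) (w₂ : M₂.W)
    (B : M₁.W → M₂.W → Prop) : Prop :=
  Asim M₁ M₂ w₁ w₂ B (fun s v => B v s)

/-- A simulation from `(M₁,w₁)` to `(M₂,w₂)`. -/
structure Sim {Θ : Type} (M₁ M₂ : KModel Θ) (w₁ : M₁.W) (w₂ : M₂.W)
    (Z : M₁.W → M₂.W → Prop) : Prop where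
  elem : Z w₁ w₂
  atom : ∀ p v s, Z v s → M₁.V p v → M₂.V p s
  forth : ∀ v s u, Z v s → M₁.R v u → ∃ t, M₂.R s t ∧ Z u t

/-- `M` is `IL`-saturated. -/
def KModel.Saturated {Θ : Type} (M : KModel Θ) : Prop :=
  ∀ (v : M.W) (Γ Δ : Set (IForm Θ)),
    (∀ (Γ' Δ' : Finset (IForm Θ)), ↑Γ' ⊆ Γ → ↑Δ' ⊆ Δ →
      ∃ u, M.R v u ∧ (∀ φ ∈ Γ', M.Sat u φ) ∧ (∀ ψ ∈ Δ', ¬ M.Sat u ψ)) →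
    ∃ u, M.R v u ∧ (∀ φ ∈ Γ, M.Sat u φ) ∧ (∀ ψ ∈ Δ, ¬ M.Sat u ψ)

/-- The expansion `[M]` of `M` with fresh atoms `q⁺_w` (coded `.inr (.inl w)`)
and `q⁻_w` (coded `.inr (.inr w)`) for every world `w`. -/
def KModel.expand {Θ : Type} (M : KModel Θ) : KModel (Θ ⊕ (M.W ⊕ M.W)) where
  W := M.W
  R := M.R
  V q := match q with
    | Sum.inl p => M.V p
    | Sum.inr (Sum.inl w) => fun v => M.R w v
    | Sum.inr (Sum.inr w) => fun v => ¬ M.R v w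

/-- The submodel of `M` with universe `A`. -/
def KModel.restrict {Θ : Type} (M : KModel Θ) (A : Set M.W) : KModel Θ where
  W := A
  R a b := M.R a b
  V p a := M.V p a

theorem aux_chain_concat {α} (R : α → α → Prop) (u : α) :
    ∀ (l : List α) (w : α), List.Chain R w l → R (l.getLastD w) u →
      List.Chain R w (l ++ [u])
  | [], w, _, h2 => List.Chain.cons h2 List.Chain.nil
  | a :: l, w, h, h2 => by
    cases h with
    | cons_cons hwa hl =>
      refine List.Chain.cons hwa (aux_chain_concat R u l a hl ?_)
      cases l with
      | nil => exact h2
      | cons b l => exact h2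

theorem aux_getLastD_concat {α} (w u : α) (l : List α) :
    (l ++ [u]).getLastD w = u := by
  simp [List.getLastD_eq_getLast?, List.getLast?_concat]

theorem aux_chain_last {α} (R : α → α → Prop) (u : α) :
    ∀ (l : List α) (w : α), List.Chain R w (l ++ [u]) → R (l.getLastD w) u
  | [], w, h => by cases h; assumption
  | a :: l, w, h => by
    cases h with
    | cons_cons _ h' =>
      have := aux_chain_last R u l a h'
      cases l with
      | nil => exact this
      | cons b l => exact this

theorem aux_last_R {Θ : Type} (M : KModel Θ) (w : M.W)
    (hM : M.IsIntuitionistic) (s t : (M.unravel w).W)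
    (h : (M.unravel w).R s t) : M.R (M.last s) (M.last t) := by
  induction h with
  | refl => exact hM.1 _
  | tail _ hst ih =>
    rename_i b c _
    obtain ⟨u, hu⟩ := hst
    refine hM.2.1 _ _ _ ih ?_
    have hc := c.2
    rw [hu] at hc
    have hlc : M.last c = u := by
      simp only [KModel.last, hu]; exact aux_getLastD_concat w u b.1
    rw [hlc]
    exact aux_chain_last M.R u b.1 w hc

theorem aux_sat_iff {Θ : Type} (M : KModel Θ) (w : M.W)
    (hM : M.IsIntuitionistic) :
    ∀ (φ : IForm Θ) (s : (M.unravel w).W),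
      (M.unravel w).Sat s φ ↔ M.Sat (M.last s) φ := by
  intro φ
  induction φ with
  | bot => intro s; exact Iff.rfl
  | top => intro s; exact Iff.rfl
  | atom p => intro s; exact Iff.rfl
  | and φ ψ ihφ ihψ => intro s; exact and_congr (ihφ s) (ihψ s)
  | or φ ψ ihφ ihψ => intro s; exact or_congr (ihφ s) (ihψ s)
  | impl φ ψ ihφ ihψ =>
    intro s
    constructor
    · intro H v hv hφ
      have hchain : List.Chain M.R w (s.1 ++ [v]) :=
        aux_chain_concat M.R v s.1 w s.2 hv
      set t : (M.unravel w).W := ⟨s.1 ++ [v], hchain⟩ with ht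
      have hRst : (M.unravel w).R s t := Relation.ReflTransGen.single ⟨v, rfl⟩
      have hlast : M.last t = v := aux_getLastD_concat w v s.1
      have := H t hRst ((ihφ t).mpr (by rw [hlast]; exact hφ))
      rw [ihψ t, hlast] at this
      exact this
    · intro H u hsu hφ
      have hR : M.R (M.last s) (M.last u) := aux_last_R M w hM s u hsu
      exact (ihψ u).mpr (H _ hR ((ihφ u).mp hφ))

/-- two paths of the unravelling ending in the same world satisfy
exactly the same intuitionistic formulas. -/
theorem unravel_same_last_same_theory {Θ : Type} (M : KModel Θ) (w : M.W)
    (hM : M.IsIntuitionistic) (s t : (M.unravel w).W)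
    (h : M.last s = M.last t) :
    ∀ φ : IForm Θ, (M.unravel w).Sat s φ ↔ (M.unravel w).Sat t φ := by
  intro φ
  rw [aux_sat_iff M w hM φ s, aux_sat_iff M w hM φ t, h]
end

section
/- Intuitionistic propositional logic satisfies the Tarski Union Property: if M_0 ≼_IL M_1 ≼_IL ... is a countable chain of IL-elementary submodels of intuitionistic Kripke models, then for every n, M_n is an IL-elementary submodel of the union ⋃_{n∈ω} M_n. -/
/-- Kripke models with worlds drawn from a fixed ambient type `α`
(used to form submodels, chains and unions). -/
structure SetModel (Θ α : Type) where
  W : Set α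
  R : α → α → Prop
  V : Θ → Set α

def SetModel.IsIntuitionistic {Θ α : Type} (M : SetModel Θ α) : Prop :=
  (∀ w ∈ M.W, M.R w w) ∧
    (∀ u ∈ M.W, ∀ v ∈ M.W, ∀ w ∈ M.W, M.R u v → M.R v w → M.R u w) ∧
    (∀ p, ∀ u ∈ M.W, ∀ v ∈ M.W, M.R u v → u ∈ M.V p → v ∈ M.V p) ∧
    (∀ p, M.V p ⊆ M.W)

def SetModel.Sat {Θ α : Type} (M : SetModel Θ α) : α → IForm Θ → Prop
  | _, .bot => False
  | _, .top => True
  | w, .atom p => w ∈ M.V p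
  | w, .and φ ψ => M.Sat w φ ∧ M.Sat w ψ
  | w, .or φ ψ => M.Sat w φ ∨ M.Sat w ψ
  | w, .impl φ ψ => ∀ v ∈ M.W, M.R w v → M.Sat v φ → M.Sat v ψ

/-- `M ⊆ N`: submodel. -/
def SetModel.Sub {Θ α : Type} (M N : SetModel Θ α) : Prop :=
  M.W ⊆ N.W ∧ (∀ a ∈ M.W, ∀ b ∈ M.W, (M.R a b ↔ N.R a b)) ∧
    ∀ p, M.V p = N.V p ∩ M.W

/-- `M ≼_IL N`: IL-elementary submodel. -/
def SetModel.Elem {Θ α : Type} (M N : SetModel Θ α) : Prop :=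
  M.Sub N ∧ ∀ w ∈ M.W, ∀ φ, M.Sat w φ ↔ N.Sat w φ

/-- The componentwise union of a chain of models. -/
def chainUnion {Θ α : Type} (M : ℕ → SetModel Θ α) : SetModel Θ α where
  W := ⋃ n, (M n).W
  R a b := ∃ n, a ∈ (M n).W ∧ b ∈ (M n).W ∧ (M n).R a b
  V p := ⋃ n, (M n).V p

/-- The space of pointed intuitionistic Kripke Θ-models. -/
def PModel (Θ : Type) : Type 1 :=
  { x : Σ M : KModel Θ, M.W // x.1.IsIntuitionistic }

/-- `IMod T`: the class of pointed models of the set of formulas `T`. -/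
def IMod {Θ : Type} (T : Set (IForm Θ)) : Set (PModel Θ) :=
  { x | ∀ φ ∈ T, x.1.1.Sat x.1.2 φ }

/-- The set of intuitionistic formulas true in every member of `A`. -/
def ThPlus {Θ : Type} (A : Set (PModel Θ)) : Set (IForm Θ) :=
  { φ | ∀ x ∈ A, x.1.1.Sat x.1.2 φ }

/-- Isomorphism of pointed models. -/
def PIso {Θ : Type} (x y : PModel Θ) : Prop :=
  ∃ e : x.1.1.W ≃ y.1.1.W, e x.1.2 = y.1.2 ∧
    (∀ a b, x.1.1.R a b ↔ y.1.1.R (e a) (e b)) ∧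
    (∀ p a, x.1.1.V p a ↔ y.1.1.V p (e a))

/-- Intuitionistic-theory equivalence of pointed models. -/
def thSetoid (Θ : Type) : Setoid (PModel Θ) where
  r x y := ∀ φ, x.1.1.Sat x.1.2 φ ↔ y.1.1.Sat y.1.2 φ
  iseqv := ⟨fun _ _ => Iff.rfl, fun h φ => (h φ).symm,
    fun h1 h2 φ => (h1 φ).trans (h2 φ)⟩


lemma sub_trans {Θ α : Type} {M N O : SetModel Θ α} (h1 : M.Sub N) (h2 : N.Sub O) :
    M.Sub O := by
  obtain ⟨hW1, hR1, hV1⟩ := h1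
  obtain ⟨hW2, hR2, hV2⟩ := h2
  refine ⟨hW1.trans hW2, fun a ha b hb => ?_, fun p => ?_⟩
  · rw [hR1 a ha b hb, hR2 a (hW1 ha) b (hW1 hb)]
  · rw [hV1 p, hV2 p, Set.inter_assoc, Set.inter_eq_self_of_subset_right hW1]

lemma elem_trans {Θ α : Type} {M N O : SetModel Θ α} (h1 : M.Elem N) (h2 : N.Elem O) :
    M.Elem O :=
  ⟨sub_trans h1.1 h2.1, fun w hw φ => (h1.2 w hw φ).trans (h2.2 w (h1.1.1 hw) φ)⟩

lemma elem_refl {Θ α : Type} {M : SetModel Θ α} (h : M.IsIntuitionistic) : M.Elem M := by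
  refine ⟨⟨subset_rfl, fun _ _ _ _ => Iff.rfl, fun p => ?_⟩, fun _ _ _ => Iff.rfl⟩
  exact (Set.inter_eq_self_of_subset_left (h.2.2.2 p)).symm

lemma chain_le {Θ α : Type} {M : ℕ → SetModel Θ α}
    (hint : ∀ n, (M n).IsIntuitionistic) (hchain : ∀ n, (M n).Elem (M (n + 1))) :
    ∀ {n m}, n ≤ m → (M n).Elem (M m) := by
  intro n m h
  induction h with
  | refl => exact elem_refl (hint n)
  | step h ih => exact elem_trans ih (hchain _)

/-- Tarski Union Property for intuitionistic propositional logic: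
every member of an IL-elementary chain is an IL-elementary submodel of the union. -/
theorem tarski_union_property {Θ α : Type} (M : ℕ → SetModel Θ α)
    (hint : ∀ n, (M n).IsIntuitionistic)
    (hchain : ∀ n, (M n).Elem (M (n + 1))) :
    ∀ n, (M n).Elem (chainUnion M) := by
  intro n
  -- R agreement between any two levels on common worlds
  have hRagree : ∀ k m a b, a ∈ (M k).W → b ∈ (M k).W → a ∈ (M m).W → b ∈ (M m).W →
      ((M k).R a b ↔ (M m).R a b) := by
    intro k m a b hak hbk ham hbm
    rcases le_total k m with h | h
    · exact (chain_le hint hchain h).1.2.1 a hak b hbk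
    · exact ((chain_le hint hchain h).1.2.1 a ham b hbm).symm
  have hVagree : ∀ k m p a, a ∈ (M k).W → a ∈ (M m).V p → a ∈ (M k).V p := by
    intro k m p a hak ham
    rcases le_total k m with h | h
    · have := (chain_le hint hchain h).1.2.2 p
      rw [this]; exact ⟨ham, hak⟩
    · have := (chain_le hint hchain h).1.2.2 p
      rw [this] at ham; exact ham.1
  -- key satisfaction lemma by induction on formulas
  have key : ∀ φ : IForm Θ, ∀ k, ∀ w ∈ (M k).W,
      ((M k).Sat w φ ↔ (chainUnion M).Sat w φ) := by
    intro φ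
    induction φ with
    | bot => intro k w _; exact Iff.rfl
    | top => intro k w _; exact Iff.rfl
    | atom p =>
      intro k w hw
      constructor
      · intro h; exact Set.mem_iUnion.2 ⟨k, h⟩
      · intro h
        rcases Set.mem_iUnion.1 h with ⟨m, hm⟩
        exact hVagree k m p w hw hm
    | and φ ψ ihφ ihψ =>
      intro k w hw
      exact and_congr (ihφ k w hw) (ihψ k w hw)
    | or φ ψ ihφ ihψ =>
      intro k w hw
      exact or_congr (ihφ k w hw) (ihψ k w hw)
    | impl φ ψ ihφ ihψ =>
      intro k w hw
      constructor
      · intro h v hv hR hφ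
        rcases hR with ⟨m, hwm, hvm, hRm⟩
        rcases le_total k m with hkm | hmk
        · -- w, v ∈ W m, use elementarity at w
          have hsat : (M m).Sat w (IForm.impl φ ψ) :=
            ((chain_le hint hchain hkm).2 w hw _).1 h
          have hφm : (M m).Sat v φ := (ihφ m v hvm).2 hφ
          have := hsat v hvm hRm hφm
          exact (ihψ m v hvm).1 this
        · -- m ≤ k : w, v ∈ W k
          have hWsub := (chain_le hint hchain hmk).1.1
          have hvk : v ∈ (M k).W := hWsub hvm
          have hRk : (M k).R w v := (hRagree k m w v hw hvk hwm hvm).2 hRm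
          have hφk : (M k).Sat v φ := (ihφ k v hvk).2 hφ
          exact (ihψ k v hvk).1 (h v hvk hRk hφk)
      · intro h v hv hR hφ
        have hvU : v ∈ (chainUnion M).W := Set.mem_iUnion.2 ⟨k, hv⟩
        have hRU : (chainUnion M).R w v := ⟨k, hw, hv, hR⟩
        have hφU : (chainUnion M).Sat v φ := (ihφ k v hv).1 hφ
        exact (ihψ k v hv).2 (h v hvU hRU hφU)
  refine ⟨⟨fun a ha => Set.mem_iUnion.2 ⟨n, ha⟩, ?_, ?_⟩, fun w hw φ => key φ n w hw⟩
  · intro a ha b hb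
    constructor
    · intro h; exact ⟨n, ha, hb, h⟩
    · rintro ⟨m, ham, hbm, hRm⟩
      exact (hRagree n m a b ha hb ham hbm).2 hRm
  · intro p
    ext a
    constructor
    · intro h
      exact ⟨Set.mem_iUnion.2 ⟨n, h⟩, (hint n).2.2.2 p h⟩
    · rintro ⟨hU, haW⟩
      rcases Set.mem_iUnion.1 hU with ⟨m, hm⟩
      exact hVagree n m p a haW hm
end

section
/- Let (M_1, w_1) and (M_2, w_2) be pointed intuitionistic Kripke Θ-models that are both IL-saturated, and suppose every intuitionistic formula true at (M_1, w_1) is true at (M_2, w_2). Then the relation A, defined for u ∈ W_i and s ∈ W_j (with {i,j} = {1,2}) by u A s iff Th⁺_IL(M_i, u) ⊆ Th⁺_IL(M_j, s), is an asimulation from (M_1, w_1) to (M_2, w_2). -/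
def IForm.conj {Θ : Type} (l : List (IForm Θ)) : IForm Θ := l.foldr .and .top

def IForm.disj {Θ : Type} (l : List (IForm Θ)) : IForm Θ := l.foldr .or .bot

lemma sat_conj {Θ : Type} (M : KModel Θ) (w : M.W) (l : List (IForm Θ)) :
    M.Sat w (IForm.conj l) ↔ ∀ φ ∈ l, M.Sat w φ := by
  induction l with
  | nil => simp [IForm.conj, KModel.Sat]
  | cons a l ih =>
    have h : M.Sat w (IForm.conj (a::l)) ↔ M.Sat w a ∧ M.Sat w (IForm.conj l) := Iff.rfl
    rw [h, ih]; simp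

lemma sat_disj {Θ : Type} (M : KModel Θ) (w : M.W) (l : List (IForm Θ)) :
    M.Sat w (IForm.disj l) ↔ ∃ φ ∈ l, M.Sat w φ := by
  induction l with
  | nil => simp [IForm.disj, KModel.Sat]
  | cons a l ih =>
    have h : M.Sat w (IForm.disj (a::l)) ↔ M.Sat w a ∨ M.Sat w (IForm.disj l) := Iff.rfl
    rw [h, ih]; simp

/-- between IL-saturated models, inclusion of positive
intuitionistic theories defines an asimulation. -/
theorem saturated_asimulation {Θ : Type} (M₁ M₂ : KModel Θ)
    (w₁ : M₁.W) (w₂ : M₂.W)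
    (h₁ : M₁.IsIntuitionistic) (h₂ : M₂.IsIntuitionistic)
    (hs₁ : M₁.Saturated) (hs₂ : M₂.Saturated)
    (hw : ∀ φ : IForm Θ, M₁.Sat w₁ φ → M₂.Sat w₂ φ) :
    Asim M₁ M₂ w₁ w₂
      (fun u s => ∀ φ : IForm Θ, M₁.Sat u φ → M₂.Sat s φ)
      (fun s u => ∀ φ : IForm Θ, M₂.Sat s φ → M₁.Sat u φ) := by
  refine ⟨hw, ?_, ?_, ?_, ?_⟩
  · intro p v s hA h; exact hA (.atom p) h
  · intro p v s hA h; exact hA (.atom p) h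
  · -- sback₁
    intro v s t hA hst
    have hfin : ∀ (Γ' Δ' : Finset (IForm Θ)), ↑Γ' ⊆ {φ | M₂.Sat t φ} → ↑Δ' ⊆ {φ | ¬ M₂.Sat t φ} →
        ∃ u, M₁.R v u ∧ (∀ φ ∈ Γ', M₁.Sat u φ) ∧ (∀ ψ ∈ Δ', ¬ M₁.Sat u ψ) := by
      intro Γ' Δ' hΓ' hΔ'
      set χ : IForm Θ := .impl (IForm.conj Γ'.toList) (IForm.disj Δ'.toList) with hχ
      have hns : ¬ M₂.Sat s χ := by
        intro h
        have h1 : M₂.Sat t (IForm.conj Γ'.toList) := by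
          rw [sat_conj]; intro φ hφ; exact hΓ' (Finset.mem_coe.mpr (by simpa using hφ))
        have h2 := h t hst h1
        rw [sat_disj] at h2
        obtain ⟨ψ, hψ, hsat⟩ := h2
        exact hΔ' (Finset.mem_coe.mpr (by simpa using hψ)) hsat
      have hnv : ¬ M₁.Sat v χ := fun h => hns (hA χ h)
      simp only [hχ, KModel.Sat, not_forall] at hnv
      obtain ⟨u, hvu, hc, hd⟩ := hnv
      refine ⟨u, hvu, ?_, ?_⟩
      · intro φ hφ; exact (sat_conj M₁ u _).mp hc φ (by simpa using hφ)
      · intro ψ hψ hsat; exact hd ((sat_disj M₁ u _).mpr ⟨ψ, by simpa using hψ, hsat⟩)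
    obtain ⟨u, hvu, hΓ, hΔ⟩ := hs₁ v {φ | M₂.Sat t φ} {φ | ¬ M₂.Sat t φ} hfin
    refine ⟨u, hvu, ?_, ?_⟩
    · intro φ hφ; exact hΓ φ hφ
    · intro φ hφ; by_contra hn; exact hΔ φ hn hφ
  · -- sback₂
    intro v s t hA hst
    have hfin : ∀ (Γ' Δ' : Finset (IForm Θ)), ↑Γ' ⊆ {φ | M₁.Sat t φ} → ↑Δ' ⊆ {φ | ¬ M₁.Sat t φ} →
        ∃ u, M₂.R v u ∧ (∀ φ ∈ Γ', M₂.Sat u φ) ∧ (∀ ψ ∈ Δ', ¬ M₂.Sat u ψ) := by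
      intro Γ' Δ' hΓ' hΔ'
      set χ : IForm Θ := .impl (IForm.conj Γ'.toList) (IForm.disj Δ'.toList) with hχ
      have hns : ¬ M₁.Sat s χ := by
        intro h
        have h1 : M₁.Sat t (IForm.conj Γ'.toList) := by
          rw [sat_conj]; intro φ hφ; exact hΓ' (Finset.mem_coe.mpr (by simpa using hφ))
        have h2 := h t hst h1
        rw [sat_disj] at h2
        obtain ⟨ψ, hψ, hsat⟩ := h2
        exact hΔ' (Finset.mem_coe.mpr (by simpa using hψ)) hsat
      have hnv : ¬ M₂.Sat v χ := fun h => hns (hA χ h)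
      simp only [hχ, KModel.Sat, not_forall] at hnv
      obtain ⟨u, hvu, hc, hd⟩ := hnv
      refine ⟨u, hvu, ?_, ?_⟩
      · intro φ hφ; exact (sat_conj M₂ u _).mp hc φ (by simpa using hφ)
      · intro ψ hψ hsat; exact hd ((sat_disj M₂ u _).mpr ⟨ψ, by simpa using hψ, hsat⟩)
    obtain ⟨u, hvu, hΓ, hΔ⟩ := hs₂ v {φ | M₁.Sat t φ} {φ | ¬ M₁.Sat t φ} hfin
    refine ⟨u, hvu, ?_, ?_⟩
    · intro φ hφ; exact hΓ φ hφ
    · intro φ hφ; by_contra hn; exact hΔ φ hn hφ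
end

section
/- Let (M, w) and (N, u) be pointed intuitionistic Kripke models and let Z be a total simulation from (M^un_w, (w)) to (N, u), i.e., a simulation whose left projection is all of W^un_w. Then there exists a homomorphism h : M^un_w → N with h((w)) = u and v Z h(v) for every v ∈ W^un_w. -/
lemma chain_of_chain_concat {α : Type*} {R : α → α → Prop} :
    ∀ {w : α} {l : List α} {a : α}, List.Chain R w (l ++ [a]) → List.Chain R w l := by
  intro w l a
  induction l generalizing w with
  | nil => intro _; exact List.Chain.nil
  | cons b l ih =>
    intro h
    rw [List.cons_append] at h
    have h : List.IsChain R (w :: b :: (l ++ [a])) := h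
    rw [List.chain_cons] at h
    exact List.chain_cons.mpr ⟨h.1, ih h.2⟩

open scoped Classical in
noncomputable def simAux {Θ : Type} (M N : KModel Θ) (w : M.W) (u : N.W)
    (Z : (M.unravel w).W → N.W → Prop) : List M.W → N.W :=
  fun l => List.reverseRecOn l u (fun l a ih =>
    if h : ∃ t, N.R ih t ∧ ∃ hc : List.Chain M.R w (l ++ [a]), Z ⟨l ++ [a], hc⟩ t
    then h.choose else ih)

lemma simAux_nil {Θ : Type} (M N : KModel Θ) (w : M.W) (u : N.W)
    (Z : (M.unravel w).W → N.W → Prop) : simAux M N w u Z [] = u := by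
  simp [simAux]

lemma simAux_spec {Θ : Type} (M N : KModel Θ) (w : M.W) (u : N.W)
    (Z : (M.unravel w).W → N.W → Prop)
    (hZ : Sim (M.unravel w) N (M.root w) u Z) :
    ∀ (l : List M.W) (hc : List.Chain M.R w l), Z ⟨l, hc⟩ (simAux M N w u Z l) := by
  intro l
  induction l using List.reverseRecOn with
  | nil => intro hc; rw [simAux_nil]; exact hZ.elem
  | append_singleton l a ih =>
    intro hc
    have hc' : List.Chain M.R w l := chain_of_chain_concat hc
    have hZl := ih hc'
    have hstep : (M.unravel w).R ⟨l, hc'⟩ ⟨l ++ [a], hc⟩ :=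
      Relation.ReflTransGen.single ⟨a, rfl⟩
    obtain ⟨t, hRt, hZt⟩ := hZ.forth _ _ _ hZl hstep
    have hex : ∃ t, N.R (simAux M N w u Z l) t ∧
        ∃ hc0 : List.Chain M.R w (l ++ [a]), Z ⟨l ++ [a], hc0⟩ t :=
      ⟨t, hRt, hc, hZt⟩
    unfold simAux at hex ⊢
    rw [List.reverseRecOn_concat, dif_pos hex]
    obtain ⟨_, hc0, h0⟩ := hex.choose_spec
    exact h0

lemma simAux_step {Θ : Type} (M N : KModel Θ) (w : M.W) (u : N.W)
    (Z : (M.unravel w).W → N.W → Prop)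
    (hZ : Sim (M.unravel w) N (M.root w) u Z)
    (l : List M.W) (a : M.W) (hc : List.Chain M.R w (l ++ [a])) :
    N.R (simAux M N w u Z l) (simAux M N w u Z (l ++ [a])) := by
  have hc' : List.Chain M.R w l := chain_of_chain_concat hc
  have hZl := simAux_spec M N w u Z hZ l hc'
  have hstep : (M.unravel w).R ⟨l, hc'⟩ ⟨l ++ [a], hc⟩ :=
    Relation.ReflTransGen.single ⟨a, rfl⟩
  obtain ⟨t, hRt, hZt⟩ := hZ.forth _ _ _ hZl hstep
  have hex : ∃ t, N.R (simAux M N w u Z l) t ∧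
      ∃ hc0 : List.Chain M.R w (l ++ [a]), Z ⟨l ++ [a], hc0⟩ t :=
    ⟨t, hRt, hc, hZt⟩
  unfold simAux at hex ⊢
  rw [List.reverseRecOn_concat, dif_pos hex]
  exact hex.choose_spec.1

/-- a total simulation from an unravelling yields a homomorphism
`h` with `h((w)) = u` and `v Z h(v)` for all `v`. -/
theorem total_simulation_homomorphism {Θ : Type} (M N : KModel Θ)
    (w : M.W) (u : N.W)
    (hM : M.IsIntuitionistic) (hN : N.IsIntuitionistic)
    (Z : (M.unravel w).W → N.W → Prop)
    (hZ : Sim (M.unravel w) N (M.root w) u Z)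
    (htotal : ∀ v : (M.unravel w).W, ∃ s, Z v s) :
    ∃ h : (M.unravel w).W → N.W, h (M.root w) = u ∧
      (∀ v, Z v (h v)) ∧
      (∀ p v, (M.unravel w).V p v → N.V p (h v)) ∧
      (∀ v v', (M.unravel w).R v v' → N.R (h v) (h v')) := by
  refine ⟨fun v => simAux M N w u Z v.1, simAux_nil M N w u Z, ?_, ?_, ?_⟩
  · intro v; exact simAux_spec M N w u Z hZ v.1 v.2
  · intro p v hv
    exact hZ.atom p v _ (simAux_spec M N w u Z hZ v.1 v.2) hv
  · intro v v' hR
    induction hR with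
    | refl => exact hN.1 _
    | @tail b c hab hbc ih =>
      obtain ⟨a0, hEq⟩ := hbc
      have hc : List.Chain M.R w (b.1 ++ [a0]) := hEq ▸ c.2
      have hstep := simAux_step M N w u Z hZ b.1 a0 hc
      rw [← hEq] at hstep
      exact hN.2.1 _ _ _ ih hstep
end

section
/- Intuitionistic propositional logic is intuitionistically compact: an IL(Θ)-theory (Γ, Δ) is satisfiable in some pointed intuitionistic Kripke model (all formulas of Γ true and all formulas of Δ false at the point) whenever every pair (Γ', Δ') with Γ' ⊆ Γ and Δ' ⊆ Δ finite is so satisfiable. -/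
section Compactness
variable {Θ : Type}

/-- Persistence of intuitionistic truth along R. -/
lemma persist {M : KModel Θ} (hM : M.IsIntuitionistic) {w v : M.W} (hwv : M.R w v) :
    ∀ φ, M.Sat w φ → M.Sat v φ := by
  intro φ
  induction φ with
  | bot => exact id
  | top => exact id
  | atom p => exact hM.2.2 p w v hwv
  | and φ ψ ihφ ihψ => exact fun hh => ⟨ihφ hh.1, ihψ hh.2⟩
  | or φ ψ ihφ ihψ => exact fun hh => hh.elim (fun x => Or.inl (ihφ x)) (fun x => Or.inr (ihψ x))
  | impl φ ψ _ _ =>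
    intro hh u hvu hu
    exact hh u (hM.2.1 w v u hwv hvu) hu

lemma sat_and {M : KModel Θ} {w : M.W} {φ ψ : IForm Θ} :
    M.Sat w (IForm.and φ ψ) ↔ M.Sat w φ ∧ M.Sat w ψ := Iff.rfl
lemma sat_or {M : KModel Θ} {w : M.W} {φ ψ : IForm Θ} :
    M.Sat w (IForm.or φ ψ) ↔ M.Sat w φ ∨ M.Sat w ψ := Iff.rfl
lemma sat_impl {M : KModel Θ} {w : M.W} {φ ψ : IForm Θ} :
    M.Sat w (IForm.impl φ ψ) ↔ ∀ v, M.R w v → M.Sat v φ → M.Sat v ψ := Iff.rfl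

/-- Finite satisfiability of a theory pair, encoded as a set of signed formulas. -/
def FS (S : Set (IForm Θ × Bool)) : Prop :=
  ∀ (Γ' Δ' : Finset (IForm Θ)),
    (∀ φ ∈ Γ', (φ, true) ∈ S) → (∀ ψ ∈ Δ', (ψ, false) ∈ S) →
    ∃ (M : KModel Θ) (w : M.W), M.IsIntuitionistic ∧
      (∀ φ ∈ Γ', M.Sat w φ) ∧ (∀ ψ ∈ Δ', ¬ M.Sat w ψ)

lemma FS.not_both {S : Set (IForm Θ × Bool)} (hS : FS S) (χ : IForm Θ)
    (h1 : (χ, true) ∈ S) (h2 : (χ, false) ∈ S) : False := by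
  obtain ⟨M, w, _, hΓ, hΔ⟩ := hS {χ} {χ}
    (by simpa using h1) (by simpa using h2)
  exact hΔ χ (by simp) (hΓ χ (by simp))

/-- Either side of a new formula can be added, preserving finite satisfiability. -/
lemma FS.step {S : Set (IForm Θ × Bool)} (hS : FS S) (χ : IForm Θ) :
    FS (insert (χ, true) S) ∨ FS (insert (χ, false) S) := by
  classical
  by_contra hc
  push_neg at hc
  obtain ⟨h1, h2⟩ := hc
  unfold FS at h1 h2
  push_neg at h1 h2
  obtain ⟨Γ1, Δ1, hΓ1, hΔ1, hns1⟩ := h1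
  obtain ⟨Γ2, Δ2, hΓ2, hΔ2, hns2⟩ := h2
  obtain ⟨M, w, hInt, hΓ, hΔ⟩ := hS (Γ1.erase χ ∪ Γ2) (Δ1 ∪ Δ2.erase χ)
    (by
      intro φ hφ
      rcases Finset.mem_union.1 hφ with hh | hh
      · rcases hΓ1 φ (Finset.mem_of_mem_erase hh) with h | h
        · exact absurd (Prod.ext_iff.1 h).1 (Finset.ne_of_mem_erase hh)
        · exact h
      · rcases hΓ2 φ hh with h | h
        · simp at h
        · exact h)
    (by
      intro ψ hψ
      rcases Finset.mem_union.1 hψ with hh | hh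
      · rcases hΔ1 ψ hh with h | h
        · simp at h
        · exact h
      · rcases hΔ2 ψ (Finset.mem_of_mem_erase hh) with h | h
        · exact absurd (Prod.ext_iff.1 h).1 (Finset.ne_of_mem_erase hh)
        · exact h)
  by_cases hsat : M.Sat w χ
  · obtain ⟨ψ, hψ, hsψ⟩ := hns1 M w hInt (fun φ hφ => by
      by_cases he : φ = χ
      · exact he ▸ hsat
      · exact hΓ φ (Finset.mem_union_left _ (Finset.mem_erase.2 ⟨he, hφ⟩)))
    exact hΔ ψ (Finset.mem_union_left _ hψ) hsψ
  · obtain ⟨ψ, hψ, hsψ⟩ := hns2 M w hInt (fun φ hφ => hΓ φ (Finset.mem_union_right _ hφ))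
    by_cases he : ψ = χ
    · exact hsat (he ▸ hsψ)
    · exact hΔ ψ (Finset.mem_union_right _ (Finset.mem_erase.2 ⟨he, hψ⟩)) hsψ

/-- Every finitely satisfiable signed theory extends to a complete one. -/
lemma FS.extend {S : Set (IForm Θ × Bool)} (hS : FS S) :
    ∃ T : Set (IForm Θ × Bool), S ⊆ T ∧ FS T ∧
      ∀ χ : IForm Θ, (χ, true) ∈ T ∨ (χ, false) ∈ T := by
  classical
  obtain ⟨T, hST, hTmax⟩ := zorn_subset_nonempty {U : Set (IForm Θ × Bool) | S ⊆ U ∧ FS U}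
    (by
      intro c hc hchain hne
      refine ⟨⋃₀ c, ⟨?_, ?_⟩, fun s hs => Set.subset_sUnion_of_mem hs⟩
      · obtain ⟨s, hs⟩ := hne
        exact (hc hs).1.trans (Set.subset_sUnion_of_mem hs)
      · intro Γ' Δ' hΓ' hΔ'
        -- find a single member of the chain containing all signed formulas
        have key : ∃ u ∈ c, (∀ φ ∈ Γ', (φ, true) ∈ u) ∧ (∀ ψ ∈ Δ', (ψ, false) ∈ u) := by
          have : ∀ x ∈ (Γ'.image (fun φ => (φ, true)) ∪ Δ'.image (fun ψ => (ψ, false)) :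
              Finset (IForm Θ × Bool)), x ∈ ⋃₀ c := by
            intro x hx
            rcases Finset.mem_union.1 hx with hh | hh
            · obtain ⟨φ, hφ, rfl⟩ := Finset.mem_image.1 hh; exact hΓ' φ hφ
            · obtain ⟨ψ, hψ, rfl⟩ := Finset.mem_image.1 hh; exact hΔ' ψ hψ
          obtain ⟨u, hu, hsub⟩ :=
            DirectedOn.exists_mem_subset_of_finset_subset_biUnion (f := fun i => i) hne
              (hchain.directedOn) (by
                intro x hx
                have := this x hx
                rw [← Set.sUnion_eq_biUnion]
                exact this)
          exact ⟨u, hu, fun φ hφ => hsub (by simp [hφ]),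
              fun ψ hψ => hsub (by simp [hψ])⟩
        obtain ⟨u, hu, h1, h2⟩ := key
        exact (hc hu).2 Γ' Δ' h1 h2)
    S ⟨Set.Subset.rfl, hS⟩
  have hTFS : FS T := hTmax.prop.2
  refine ⟨T, hST, hTFS, ?_⟩
  intro χ
  by_contra hc
  push_neg at hc
  rcases hTFS.step χ with hstep | hstep
  · have := hTmax.2 (y := insert (χ, true) T)
      ⟨hTmax.prop.1.trans (Set.subset_insert _ _), hstep⟩ (Set.subset_insert _ _)
    exact hc.1 (this (Set.mem_insert _ _))
  · have := hTmax.2 (y := insert (χ, false) T)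
      ⟨hTmax.prop.1.trans (Set.subset_insert _ _), hstep⟩ (Set.subset_insert _ _)
    exact hc.2 (this (Set.mem_insert _ _))

/-- The canonical model on complete finitely satisfiable signed theories. -/
def Canon (Θ : Type) : KModel Θ where
  W := {S : Set (IForm Θ × Bool) // FS S ∧ ∀ χ : IForm Θ, (χ, true) ∈ S ∨ (χ, false) ∈ S}
  R a b := ∀ φ : IForm Θ, (φ, true) ∈ a.1 → (φ, true) ∈ b.1
  V p a := (IForm.atom p, true) ∈ a.1

lemma canon_int : (Canon Θ).IsIntuitionistic :=
  ⟨fun _ _ h => h, fun _ _ _ h1 h2 φ hφ => h2 φ (h1 φ hφ), fun _ _ _ h1 h2 => h1 _ h2⟩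

lemma canon_mem_false {a : (Canon Θ).W} {χ : IForm Θ} (hχ : (χ, true) ∉ a.1) :
    (χ, false) ∈ a.1 := (a.2.2 χ).resolve_left hχ

/-- The truth lemma. -/
lemma truth_lemma (φ : IForm Θ) : ∀ a : (Canon Θ).W, (Canon Θ).Sat a φ ↔ (φ, true) ∈ a.1 := by
  classical
  induction φ with
  | bot =>
    intro a
    simp only [KModel.Sat, false_iff]
    intro hmem
    obtain ⟨M, w, _, hΓ, _⟩ := a.2.1 {IForm.bot} ∅ (by simpa using hmem) (by simp)
    exact hΓ IForm.bot (by simp)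
  | top =>
    intro a
    simp only [KModel.Sat, true_iff]
    by_contra hmem
    obtain ⟨M, w, _, _, hΔ⟩ := a.2.1 ∅ {IForm.top}
      (by simp) (by simpa using canon_mem_false hmem)
    exact hΔ IForm.top (by simp) trivial
  | atom p => exact fun a => Iff.rfl
  | and φ ψ ihφ ihψ =>
    intro a
    simp only [KModel.Sat, ihφ a, ihψ a]
    constructor
    · rintro ⟨h1, h2⟩
      by_contra hmem
      obtain ⟨M, w, _, hΓ, hΔ⟩ := a.2.1 {φ, ψ} {IForm.and φ ψ}
        (by intro x hx; simp at hx; rcases hx with rfl | rfl <;> assumption)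
        (by simpa using canon_mem_false hmem)
      exact hΔ (IForm.and φ ψ) (by simp) (sat_and.2 ⟨hΓ φ (by simp), hΓ ψ (by simp)⟩)
    · intro hmem
      constructor
      · by_contra h1
        obtain ⟨M, w, _, hΓ, hΔ⟩ := a.2.1 {IForm.and φ ψ} {φ}
          (by simpa using hmem) (by simpa using canon_mem_false h1)
        exact hΔ φ (by simp) (sat_and.1 (hΓ (IForm.and φ ψ) (by simp))).1
      · by_contra h2
        obtain ⟨M, w, _, hΓ, hΔ⟩ := a.2.1 {IForm.and φ ψ} {ψ}
          (by simpa using hmem) (by simpa using canon_mem_false h2)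
        exact hΔ ψ (by simp) (sat_and.1 (hΓ (IForm.and φ ψ) (by simp))).2
  | or φ ψ ihφ ihψ =>
    intro a
    simp only [KModel.Sat, ihφ a, ihψ a]
    constructor
    · rintro (h | h)
      · by_contra hmem
        obtain ⟨M, w, _, hΓ, hΔ⟩ := a.2.1 {φ} {IForm.or φ ψ}
          (by simpa using h) (by simpa using canon_mem_false hmem)
        exact hΔ (IForm.or φ ψ) (by simp) (sat_or.2 (Or.inl (hΓ φ (by simp))))
      · by_contra hmem
        obtain ⟨M, w, _, hΓ, hΔ⟩ := a.2.1 {ψ} {IForm.or φ ψ}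
          (by simpa using h) (by simpa using canon_mem_false hmem)
        exact hΔ (IForm.or φ ψ) (by simp) (sat_or.2 (Or.inr (hΓ ψ (by simp))))
    · intro hmem
      by_contra hc
      push_neg at hc
      obtain ⟨M, w, _, hΓ, hΔ⟩ := a.2.1 {IForm.or φ ψ} {φ, ψ}
        (by simpa using hmem)
        (by intro x hx; simp at hx
            rcases hx with rfl | rfl
            · exact canon_mem_false hc.1
            · exact canon_mem_false hc.2)
      rcases sat_or.1 (hΓ (IForm.or φ ψ) (by simp)) with h | h
      · exact hΔ φ (by simp) h
      · exact hΔ ψ (by simp) h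
  | impl φ ψ ihφ ihψ =>
    intro a
    simp only [KModel.Sat]
    constructor
    · intro hsat
      by_contra hmem
      -- build a successor where φ holds and ψ fails
      have hFS : FS (insert (φ, true) {x | x ∈ a.1 ∧ x.2 = true} ∪ {(ψ, false)} :
          Set (IForm Θ × Bool)) := by
        intro Γ' Δ' hΓ' hΔ'
        obtain ⟨M, w, hInt, hΓ, hΔ⟩ := a.2.1 (Γ'.erase φ) {IForm.impl φ ψ}
          (by
            intro χ hχ
            have := hΓ' χ (Finset.mem_of_mem_erase hχ)
            rcases this with hh | hh
            · rcases hh with hh | hh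
              · exact absurd (Prod.ext_iff.1 hh).1 (Finset.ne_of_mem_erase hχ)
              · exact hh.1
            · simp at hh)
          (by simpa using canon_mem_false hmem)
        have := hΔ (IForm.impl φ ψ) (by simp)
        rw [sat_impl] at this
        push_neg at this
        obtain ⟨v, hwv, hφv, hψv⟩ := this
        refine ⟨M, v, hInt, fun χ hχ => ?_, fun χ hχ => ?_⟩
        · by_cases he : χ = φ
          · exact he ▸ hφv
          · exact persist hInt hwv χ (hΓ χ (Finset.mem_erase.2 ⟨he, hχ⟩))
        · have := hΔ' χ hχ
          rcases this with hh | hh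
          · rcases hh with hh | hh
            · simp at hh
            · exact absurd hh.2 Bool.false_ne_true
          · simp at hh; subst hh; exact hψv
      obtain ⟨T, hsub, hTFS, hTcomp⟩ := hFS.extend
      set b : (Canon Θ).W := ⟨T, hTFS, hTcomp⟩ with hb
      have hab : (Canon Θ).R a b := by
        intro χ hχ
        exact hsub (Or.inl (Or.inr ⟨hχ, rfl⟩))
      have hφb : (Canon Θ).Sat b φ := (ihφ b).2 (hsub (Or.inl (Or.inl rfl)))
      have hψb := hsat b hab hφb
      have hψT : (ψ, true) ∈ T := (ihψ b).1 hψb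
      exact hTFS.not_both ψ hψT (hsub (Or.inr rfl))
    · intro hmem b hab hφb
      have hφT : (φ, true) ∈ b.1 := (ihφ b).1 hφb
      refine (ihψ b).2 ?_
      by_contra hψ
      obtain ⟨M, w, hInt, hΓ, hΔ⟩ := b.2.1 {IForm.impl φ ψ, φ} {ψ}
        (by intro x hx; simp at hx
            rcases hx with rfl | rfl
            · exact hab _ hmem
            · exact hφT)
        (by simpa using canon_mem_false hψ)
      exact hΔ ψ (by simp) (sat_impl.1 (hΓ (IForm.impl φ ψ) (by simp)) w (hInt.1 w) (hΓ φ (by simp)))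

end Compactness

/-- intuitionistic compactness: a theory `(Γ, Δ)` is satisfiable
in a pointed intuitionistic Kripke model whenever all its finite subtheories are. -/
theorem intuitionistic_compactness {Θ : Type} (Γ Δ : Set (IForm Θ))
    (h : ∀ (Γ' Δ' : Finset (IForm Θ)), ↑Γ' ⊆ Γ → ↑Δ' ⊆ Δ →
      ∃ (M : KModel Θ) (w : M.W), M.IsIntuitionistic ∧
        (∀ φ ∈ Γ', M.Sat w φ) ∧ (∀ ψ ∈ Δ', ¬ M.Sat w ψ)) :
    ∃ (M : KModel Θ) (w : M.W), M.IsIntuitionistic ∧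
      (∀ φ ∈ Γ, M.Sat w φ) ∧ (∀ ψ ∈ Δ, ¬ M.Sat w ψ) := by
  have hFS : FS ((fun φ => (φ, true)) '' Γ ∪ (fun ψ => (ψ, false)) '' Δ) := by
    intro Γ' Δ' hΓ' hΔ'
    apply h Γ' Δ'
    · intro φ hφ
      rcases hΓ' φ hφ with ⟨x, hx, hxe⟩ | ⟨x, hx, hxe⟩
      · cases hxe; exact hx
      · exact absurd (Prod.ext_iff.1 hxe).2 (by simp)
    · intro ψ hψ
      rcases hΔ' ψ hψ with ⟨x, hx, hxe⟩ | ⟨x, hx, hxe⟩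
      · exact absurd (Prod.ext_iff.1 hxe).2 (by simp)
      · cases hxe; exact hx
  obtain ⟨T, hsub, hTFS, hTcomp⟩ := hFS.extend
  refine ⟨Canon Θ, ⟨T, hTFS, hTcomp⟩, canon_int, ?_, ?_⟩
  · intro φ hφ
    exact (truth_lemma φ _).2 (hsub (Or.inl ⟨φ, hφ, rfl⟩))
  · intro ψ hψ
    intro hsat
    exact hTFS.not_both ψ ((truth_lemma ψ _).1 hsat) (hsub (Or.inr ⟨ψ, hψ, rfl⟩))
end

section
/- The topological space of pointed intuitionistic Kripke models with the intuitionistic topology is connected: it cannot be written as the union of two nonempty separated subclasses. (Key ingredient: the disjunction property of intuitionistic logic.) -/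
/-- Persistence of intuitionistic formulas. -/
lemma KModel.sat_persist {Θ : Type} {M : KModel Θ} (hM : M.IsIntuitionistic)
    {w v : M.W} (hwv : M.R w v) : ∀ φ, M.Sat w φ → M.Sat v φ := by
  intro φ
  induction φ generalizing w v with
  | bot => exact fun h => h
  | top => exact fun _ => trivial
  | atom p => exact fun h => hM.2.2 p w v hwv h
  | and φ ψ ihφ ihψ => exact fun h => ⟨ihφ hwv h.1, ihψ hwv h.2⟩
  | or φ ψ ihφ ihψ => exact fun h => Or.imp (ihφ hwv) (ihψ hwv) h
  | impl φ ψ ihφ ihψ =>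
    intro h u hvu hu
    exact h u (hM.2.1 w v u hwv hvu) hu

/-- Glue two models below a fresh root. -/
def glueModel {Θ : Type} (M N : KModel Θ) : KModel Θ where
  W := Option (M.W ⊕ N.W)
  R x y := match x, y with
    | none, _ => True
    | some (Sum.inl u), some (Sum.inl v) => M.R u v
    | some (Sum.inr u), some (Sum.inr v) => N.R u v
    | _, _ => False
  V p x := match x with
    | none => False
    | some (Sum.inl u) => M.V p u
    | some (Sum.inr u) => N.V p u

lemma glue_intu {Θ : Type} {M N : KModel Θ} (hM : M.IsIntuitionistic)
    (hN : N.IsIntuitionistic) : (glueModel M N).IsIntuitionistic := by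
  refine ⟨?_, ?_, ?_⟩
  · rintro (_ | (u | u))
    · trivial
    · exact hM.1 u
    · exact hN.1 u
  · rintro (_ | (u | u)) (_ | (v | v)) (_ | (w | w)) h1 h2 <;>
      first
      | trivial
      | exact h2.elim
      | exact h1.elim
      | exact hM.2.1 u v w h1 h2
      | exact hN.2.1 u v w h1 h2
  · rintro p (_ | (u | u)) (_ | (v | v)) h1 h2 <;>
      first
      | exact h2.elim
      | exact h1.elim
      | exact hM.2.2 p u v h1 h2
      | exact hN.2.2 p u v h1 h2

lemma glue_sat_inl {Θ : Type} (M N : KModel Θ) :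
    ∀ (φ : IForm Θ) (u : M.W),
      (glueModel M N).Sat (some (Sum.inl u)) φ ↔ M.Sat u φ := by
  intro φ
  induction φ with
  | bot => exact fun u => Iff.rfl
  | top => exact fun u => Iff.rfl
  | atom p => exact fun u => Iff.rfl
  | and φ ψ ihφ ihψ => exact fun u => and_congr (ihφ u) (ihψ u)
  | or φ ψ ihφ ihψ => exact fun u => or_congr (ihφ u) (ihψ u)
  | impl φ ψ ihφ ihψ =>
    intro u
    constructor
    · intro h v hv hφ
      exact (ihψ v).1 (h (some (Sum.inl v)) hv ((ihφ v).2 hφ))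
    · rintro h (_ | (v | v)) hv hφ
      · exact hv.elim
      · exact (ihψ v).2 (h v hv ((ihφ v).1 hφ))
      · exact hv.elim

lemma glue_sat_inr {Θ : Type} (M N : KModel Θ) :
    ∀ (φ : IForm Θ) (u : N.W),
      (glueModel M N).Sat (some (Sum.inr u)) φ ↔ N.Sat u φ := by
  intro φ
  induction φ with
  | bot => exact fun u => Iff.rfl
  | top => exact fun u => Iff.rfl
  | atom p => exact fun u => Iff.rfl
  | and φ ψ ihφ ihψ => exact fun u => and_congr (ihφ u) (ihψ u)
  | or φ ψ ihφ ihψ => exact fun u => or_congr (ihφ u) (ihψ u)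
  | impl φ ψ ihφ ihψ =>
    intro u
    constructor
    · intro h v hv hφ
      exact (ihψ v).1 (h (some (Sum.inr v)) hv ((ihφ v).2 hφ))
    · rintro h (_ | (v | v)) hv hφ
      · exact hv.elim
      · exact hv.elim
      · exact (ihψ v).2 (h v hv ((ihφ v).1 hφ))

lemma closure_eq_IMod_ThPlus {Θ : Type} [τ : TopologicalSpace (PModel Θ)]
    (hτ : ∀ C : Set (PModel Θ), IsClosed C ↔ ∃ T : Set (IForm Θ), C = IMod T)
    (A : Set (PModel Θ)) : closure A = IMod (ThPlus A) := by
  apply le_antisymm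
  · apply closure_minimal
    · intro x hx φ hφ
      exact hφ x hx
    · exact (hτ _).2 ⟨ThPlus A, rfl⟩
  · obtain ⟨T, hT⟩ := (hτ (closure A)).1 isClosed_closure
    rw [hT]
    intro x hx φ hφ
    exact hx φ fun y hy => (hT ▸ subset_closure hy) φ hφ

/-- the intuitionistic topology is connected: the space is not the
union of two nonempty separated subclasses. -/
theorem intuitionistic_topology_connected {Θ : Type}
    [τ : TopologicalSpace (PModel Θ)]
    (hτ : ∀ C : Set (PModel Θ), IsClosed C ↔ ∃ T : Set (IForm Θ), C = IMod T) :
    ∀ A B : Set (PModel Θ), A.Nonempty → B.Nonempty →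
      closure A ∩ B = ∅ → A ∩ closure B = ∅ → A ∪ B ≠ Set.univ := by
  intro A B ⟨a, ha⟩ ⟨b, hb⟩ hAB hBA hU
  -- b is not in closure A, so some φ true throughout A fails at b
  have hbA : b ∉ closure A := fun h => Set.eq_empty_iff_forall_notMem.1 hAB b ⟨h, hb⟩
  rw [closure_eq_IMod_ThPlus hτ] at hbA
  simp only [IMod, Set.mem_setOf_eq, not_forall] at hbA
  obtain ⟨φ, hφA, hφb⟩ := hbA
  -- a is not in closure B, so some ψ true throughout B fails at a
  have haB : a ∉ closure B := fun h => Set.eq_empty_iff_forall_notMem.1 hBA a ⟨ha, h⟩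
  rw [closure_eq_IMod_ThPlus hτ] at haB
  simp only [IMod, Set.mem_setOf_eq, not_forall] at haB
  obtain ⟨ψ, hψB, hψa⟩ := haB
  -- form the glued model with root `none`
  set G : KModel Θ := glueModel a.1.1 b.1.1 with hG
  have hGint : G.IsIntuitionistic := glue_intu a.2 b.2
  set c : PModel Θ := ⟨⟨G, none⟩, hGint⟩ with hc
  have hcmem : c ∈ A ∪ B := hU ▸ Set.mem_univ c
  cases hcmem with
  | inl hcA =>
    -- c ⊨ φ, persist up to the copy of b's point, contradiction with hφb
    have h1 : G.Sat none φ := hφA c hcA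
    have h2 : G.Sat (some (Sum.inr b.1.2)) φ :=
      KModel.sat_persist hGint (w := none) trivial φ h1
    exact hφb ((glue_sat_inr a.1.1 b.1.1 φ b.1.2).1 h2)
  | inr hcB =>
    have h1 : G.Sat none ψ := hψB c hcB
    have h2 : G.Sat (some (Sum.inl a.1.2)) ψ :=
      KModel.sat_persist hGint (w := none) trivial ψ h1
    exact hψa ((glue_sat_inl a.1.1 b.1.1 ψ a.1.2).1 h2)
end

section
/- The quotient space of pointed intuitionistic Kripke models modulo intuitionistic-theory equivalence is not Hausdorff: any two open sets containing distinct points [(M,w)] and [(N,v)] have nonempty intersection, by the disjunction property of intuitionistic logic. -/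
/-- Persistence: intuitionistic satisfaction is monotone along R. -/
lemma sat_mono {Θ : Type} (M : KModel Θ) (h : M.IsIntuitionistic) :
    ∀ (φ : IForm Θ) {u v : M.W}, M.R u v → M.Sat u φ → M.Sat v φ := by
  intro φ
  induction φ with
  | bot => intro u v _ hs; exact hs.elim
  | top => intro u v _ _; trivial
  | atom p => intro u v huv hs; exact h.2.2 p u v huv hs
  | and φ ψ ih1 ih2 => intro u v huv hs; exact ⟨ih1 huv hs.1, ih2 huv hs.2⟩
  | or φ ψ ih1 ih2 =>
      intro u v huv hs
      rcases hs with hs | hs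
      · exact Or.inl (ih1 huv hs)
      · exact Or.inr (ih2 huv hs)
  | impl φ ψ ih1 ih2 =>
      intro u v huv hs t hvt hφ
      exact hs t (h.2.1 u v t huv hvt) hφ

/-- Join of two models with a fresh root below both. -/
def joinModel {Θ : Type} (M N : KModel Θ) : KModel Θ where
  W := Option (M.W ⊕ N.W)
  R a b := match a, b with
    | none, _ => True
    | some (.inl a), some (.inl b) => M.R a b
    | some (.inr a), some (.inr b) => N.R a b
    | _, _ => False
  V p a := match a with
    | none => False
    | some (.inl a) => M.V p a
    | some (.inr a) => N.V p a

lemma joinModel_int {Θ : Type} (M N : KModel Θ)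
    (hM : M.IsIntuitionistic) (hN : N.IsIntuitionistic) :
    (joinModel M N).IsIntuitionistic := by
  refine ⟨?_, ?_, ?_⟩
  · rintro (_ | a | a)
    · trivial
    · exact hM.1 a
    · exact hN.1 a
  · rintro (_ | a | a) (_ | b | b) (_ | c | c) h1 h2 <;>
      simp_all [joinModel]
    · exact hM.2.1 a b c h1 h2
    · exact hN.2.1 a b c h1 h2
  · rintro p (_ | a | a) (_ | b | b) h1 h2 <;> simp_all [joinModel]
    · exact hM.2.2 p a b h1 h2
    · exact hN.2.2 p a b h1 h2

lemma joinModel_sat_inl {Θ : Type} (M N : KModel Θ) :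
    ∀ (φ : IForm Θ) (a : M.W),
      ((joinModel M N).Sat (some (.inl a)) φ ↔ M.Sat a φ) := by
  intro φ
  induction φ with
  | bot => intro a; exact Iff.rfl
  | top => intro a; exact Iff.rfl
  | atom p => intro a; exact Iff.rfl
  | and φ ψ ih1 ih2 => intro a; exact and_congr (ih1 a) (ih2 a)
  | or φ ψ ih1 ih2 => intro a; exact or_congr (ih1 a) (ih2 a)
  | impl φ ψ ih1 ih2 =>
      intro a
      constructor
      · intro h b hab hφ
        exact (ih2 b).mp (h (some (.inl b)) hab ((ih1 b).mpr hφ))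
      · rintro h (_ | b | b) hab hφ
        · exact hab.elim
        · exact (ih2 b).mpr (h b hab ((ih1 b).mp hφ))
        · exact hab.elim

lemma joinModel_sat_inr {Θ : Type} (M N : KModel Θ) :
    ∀ (φ : IForm Θ) (a : N.W),
      ((joinModel M N).Sat (some (.inr a)) φ ↔ N.Sat a φ) := by
  intro φ
  induction φ with
  | bot => intro a; exact Iff.rfl
  | top => intro a; exact Iff.rfl
  | atom p => intro a; exact Iff.rfl
  | and φ ψ ih1 ih2 => intro a; exact and_congr (ih1 a) (ih2 a)
  | or φ ψ ih1 ih2 => intro a; exact or_congr (ih1 a) (ih2 a)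
  | impl φ ψ ih1 ih2 =>
      intro a
      constructor
      · intro h b hab hφ
        exact (ih2 b).mp (h (some (.inr b)) hab ((ih1 b).mpr hφ))
      · rintro h (_ | b | b) hab hφ
        · exact hab.elim
        · exact hab.elim
        · exact (ih2 b).mpr (h b hab ((ih1 b).mp hφ))

/-- the quotient space is not Hausdorff: any open sets around two
distinct points intersect. -/
theorem quotient_not_hausdorff {Θ : Type} [τ : TopologicalSpace (PModel Θ)]
    (hτ : ∀ C : Set (PModel Θ), IsClosed C ↔ ∃ T : Set (IForm Θ), C = IMod T) :
    ∀ x y : Quotient (thSetoid Θ), x ≠ y →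
      ∀ U V : Set (Quotient (thSetoid Θ)), IsOpen U → IsOpen V →
        x ∈ U → y ∈ V → (U ∩ V).Nonempty := by
  intro x y _ U V hU hV hxU hyV
  obtain ⟨mx, rfl⟩ := Quotient.exists_rep x
  obtain ⟨my, rfl⟩ := Quotient.exists_rep y
  -- preimages are open, so their complements are IMod T, IMod S
  have hUo : IsOpen ((Quotient.mk (thSetoid Θ)) ⁻¹' U) :=
    hU.preimage continuous_quotient_mk'
  have hVo : IsOpen ((Quotient.mk (thSetoid Θ)) ⁻¹' V) :=
    hV.preimage continuous_quotient_mk'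
  obtain ⟨T, hT⟩ := (hτ _).mp hUo.isClosed_compl
  obtain ⟨S, hS⟩ := (hτ _).mp hVo.isClosed_compl
  -- extract failing formulas
  have hmx : mx ∉ IMod T := by
    intro h
    have : mx ∈ ((Quotient.mk (thSetoid Θ)) ⁻¹' U)ᶜ := hT ▸ h
    exact this hxU
  have hmy : my ∉ IMod S := by
    intro h
    have : my ∈ ((Quotient.mk (thSetoid Θ)) ⁻¹' V)ᶜ := hS ▸ h
    exact this hyV
  simp only [IMod, Set.mem_setOf_eq, not_forall] at hmx hmy
  obtain ⟨φ, hφT, hφ⟩ := hmx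
  obtain ⟨ψ, hψS, hψ⟩ := hmy
  -- the joined model with fresh root
  set P := joinModel mx.1.1 my.1.1 with hP
  have hPint : P.IsIntuitionistic := joinModel_int _ _ mx.2 my.2
  set z : PModel Θ := ⟨⟨P, none⟩, hPint⟩ with hz
  have hzφ : ¬ P.Sat none φ := by
    intro h
    have hr : P.R none (some (.inl mx.1.2)) := trivial
    have := sat_mono P hPint φ hr h
    exact hφ ((joinModel_sat_inl _ _ φ mx.1.2).mp this)
  have hzψ : ¬ P.Sat none ψ := by
    intro h
    have hr : P.R none (some (.inr my.1.2)) := trivial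
    have := sat_mono P hPint ψ hr h
    exact hψ ((joinModel_sat_inr _ _ ψ my.1.2).mp this)
  refine ⟨Quotient.mk (thSetoid Θ) z, ?_, ?_⟩
  · by_contra hzU
    have : z ∈ ((Quotient.mk (thSetoid Θ)) ⁻¹' U)ᶜ := hzU
    rw [hT] at this
    exact hzφ (this φ hφT)
  · by_contra hzV
    have : z ∈ ((Quotient.mk (thSetoid Θ)) ⁻¹' V)ᶜ := hzV
    rw [hS] at this
    exact hzψ (this ψ hψS)
end

section
/- If f is an IL-embedding of intuitionistic Kripke model M_1 into M_2, then the submodel of M_2 with universe f(W_1) is an IL-elementary submodel of M_2, and it is isomorphic to M_1. -/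
/-- the image of an IL-embedding is an IL-elementary submodel of
the target and is isomorphic to the source. -/
theorem embedding_image_elementary {Θ : Type} (M₁ M₂ : KModel Θ)
    (h₁ : M₁.IsIntuitionistic) (h₂ : M₂.IsIntuitionistic)
    (f : M₁.W → M₂.W) (hinj : Function.Injective f)
    (hatom : ∀ p v, M₁.V p v → M₂.V p (f v))
    (hshom : ∀ v u, M₁.R v u ↔ M₂.R (f v) (f u))
    (hth : ∀ (v : M₁.W) (φ : IForm Θ), M₁.Sat v φ ↔ M₂.Sat (f v) φ) :
    (∀ (v : (M₂.restrict (Set.range f)).W) (φ : IForm Θ),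
      (M₂.restrict (Set.range f)).Sat v φ ↔ M₂.Sat v.1 φ) ∧
    ∃ e : M₁.W ≃ (M₂.restrict (Set.range f)).W,
      (∀ a b, M₁.R a b ↔ (M₂.restrict (Set.range f)).R (e a) (e b)) ∧
      (∀ p a, M₁.V p a ↔ (M₂.restrict (Set.range f)).V p (e a)) := by
  have key : ∀ (φ : IForm Θ) (a : M₁.W),
      (M₂.restrict (Set.range f)).Sat ⟨f a, ⟨a, rfl⟩⟩ φ ↔ M₁.Sat a φ := by
    intro φ
    induction φ with
    | bot => intro a; exact Iff.rfl
    | top => intro a; exact Iff.rfl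
    | atom p => intro a; exact (hth a (.atom p)).symm
    | and φ ψ ihφ ihψ => intro a; exact and_congr (ihφ a) (ihψ a)
    | or φ ψ ihφ ihψ => intro a; exact or_congr (ihφ a) (ihψ a)
    | impl φ ψ ihφ ihψ =>
      intro a
      constructor
      · intro h v hR hφ
        exact (ihψ v).mp (h ⟨f v, ⟨v, rfl⟩⟩ ((hshom a v).mp hR) ((ihφ v).mpr hφ))
      · rintro h ⟨_, b, rfl⟩ hR hφ
        exact (ihψ b).mpr (h b ((hshom a b).mpr hR) ((ihφ b).mp hφ))
  constructor
  · rintro ⟨_, a, rfl⟩ φ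
    exact (key φ a).trans (hth a φ)
  · refine ⟨Equiv.ofInjective f hinj, fun a b => hshom a b, fun p a => hth a (.atom p)⟩
end
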